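/- A structural matrix X ∈ {0,*}^{n×m} satisfies condition (G₀) — for every non-empty V ⊆ [1;n] there is a column v with |V ∩ NZR(v)| = 1 — if and only if every real matrix M with the non-zero structure of X has full row rank n. -/

import Mathlib

open Matrix Finset

lemma rank_eq_iff_linearIndependent_rows {n m : ℕ} (M : Matrix (Fin n) (Fin m) ℝ) :
    M.rank = n ↔ LinearIndependent ℝ M.row := by
  rw [M.rank_eq_finrank_span_row, linearIndependent_iff_card_eq_finrank_span,
    Set.finrank, Fintype.card_fin]
  exact eq_comm

/-- `X` satisfies condition (G₀) iff every real matrix with the non-zero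
structure of `X` has full row rank `n`. -/
theorem G0_iff_full_rank (n m : ℕ) (X : Matrix (Fin n) (Fin m) Bool) :
    (∀ V : Finset (Fin n), V.Nonempty →
      ∃ v : Fin m, (V.filter (fun i => X i v = true)).card = 1)
    ↔ (∀ M : Matrix (Fin n) (Fin m) ℝ,
        (∀ i j, M i j ≠ 0 ↔ X i j = true) → M.rank = n) := by
  classical
  constructor
  · -- (G₀) ⇒ full rank
    intro hG M hM
    rw [rank_eq_iff_linearIndependent_rows]
    rw [Fintype.linearIndependent_iff]
    intro g hg
    by_contra hne
    push_neg at hne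
    obtain ⟨i₀, hi₀⟩ := hne
    set V : Finset (Fin n) := univ.filter (fun i => g i ≠ 0) with hV
    have hVne : V.Nonempty := ⟨i₀, by simp [hV, hi₀]⟩
    obtain ⟨v, hv⟩ := hG V hVne
    obtain ⟨j, hj⟩ := Finset.card_eq_one.mp hv
    have hjV : j ∈ V ∧ X j v = true := by
      have := hj ▸ Finset.mem_singleton_self j
      exact ⟨(Finset.mem_filter.mp this).1, (Finset.mem_filter.mp this).2⟩
    -- evaluate the relation at column v
    have h0 : ∑ i, g i * M i v = 0 := by
      have := congrFun hg v
      simpa using this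
    have hsum : ∑ i, g i * M i v = g j * M j v := by
      rw [Finset.sum_eq_single j]
      · intro i _ hij
        by_cases hgi : g i = 0
        · simp [hgi]
        · have hiV : i ∈ V := by simp [hV, hgi]
          have hXi : X i v ≠ true := by
            intro hX
            have : i ∈ V.filter (fun i => X i v = true) := Finset.mem_filter.mpr ⟨hiV, hX⟩
            rw [hj, Finset.mem_singleton] at this
            exact hij this
          have : M i v = 0 := by
            by_contra hMi
            exact hXi ((hM i v).mp hMi)
          simp [this]
      · intro h; exact absurd (Finset.mem_univ j) h
    have hgj : g j ≠ 0 := by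
      have := Finset.mem_filter.mp hjV.1
      exact this.2
    have hMj : M j v ≠ 0 := (hM j v).mpr hjV.2
    rw [hsum] at h0
    exact (mul_ne_zero hgj hMj) h0
  · -- full rank ⇒ (G₀), by contradiction
    intro hR V hVne
    by_contra hno
    push_neg at hno
    -- F v = rows of V with a nonzero in column v
    set F : Fin m → Finset (Fin n) := fun v => V.filter (fun i => X i v = true) with hF
    have hcard : ∀ v, (F v).Nonempty → 2 ≤ (F v).card := by
      intro v hne
      have h1 : (F v).card ≠ 1 := hno v
      have h0 : 1 ≤ (F v).card := Finset.card_pos.mpr hne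
      omega
    -- choose a distinguished element of F v when nonempty via min
    -- build the matrix
    set M : Matrix (Fin n) (Fin m) ℝ := fun i v =>
      if X i v = true then
        (if i ∈ V then
          (if (F v).min = (i : WithBot (Fin n)) then -(((F v).card : ℝ) - 1) else 1)
        else 1)
      else 0 with hMdef
    have hstruct : ∀ i j, M i j ≠ 0 ↔ X i j = true := by
      intro i j
      constructor
      · intro h
        by_contra hX
        simp [hMdef, hX] at h
      · intro hX
        simp only [hMdef, hX, if_true]
        by_cases hiV : i ∈ V
        · simp only [hiV, if_true]
          by_cases hmin : (F j).min = (i : WithBot (Fin n))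
          · have hne : (F j).Nonempty := ⟨i, Finset.mem_filter.mpr ⟨hiV, hX⟩⟩
            have h2 := hcard j hne
            simp only [hmin, if_true]
            have : (2 : ℝ) ≤ ((F j).card : ℝ) := by exact_mod_cast h2
            intro h
            split_ifs at h <;> nlinarith
          · simp [hmin]
        · simp [hiV]
    have hrank := hR M hstruct
    rw [rank_eq_iff_linearIndependent_rows, Fintype.linearIndependent_iff] at hrank
    -- the indicator of V is a dependence relation
    set g : Fin n → ℝ := fun i => if i ∈ V then 1 else 0 with hg
    have hrel : ∑ i, g i • M i = 0 := by
      funext v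
      simp only [Finset.sum_apply, Pi.smul_apply, Pi.zero_apply, smul_eq_mul]
      have step1 : ∑ i, g i * M i v = ∑ i ∈ V, M i v := by
        rw [← Finset.sum_filter_of_ne (f := fun i => g i * M i v)
          (p := fun i => i ∈ V)]
        · rw [Finset.filter_mem_eq_inter, Finset.univ_inter]
          apply Finset.sum_congr rfl
          intro i hi
          simp [hg, hi]
        · intro i _ h
          by_contra hiV
          simp [hg, hiV] at h
      rw [step1]
      have step2 : ∑ i ∈ V, M i v = ∑ i ∈ F v, M i v := by
        rw [hF]
        rw [Finset.sum_filter_of_ne]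
        intro i hiV h
        by_contra hX
        simp [hMdef, hX] at h
      rw [step2]
      by_cases hne : (F v).Nonempty
      · obtain ⟨i₀, hi₀⟩ := Finset.min_of_nonempty hne
        have hi₀mem : i₀ ∈ F v := Finset.mem_of_min hi₀
        have hi₀V : i₀ ∈ V := (Finset.mem_filter.mp hi₀mem).1
        have hi₀X : X i₀ v = true := (Finset.mem_filter.mp hi₀mem).2
        have h2 := hcard v hne
        rw [← Finset.add_sum_erase _ _ hi₀mem]
        have hval : M i₀ v = -(((F v).card : ℝ) - 1) := by
          simp only [hMdef, hi₀X, if_true, hi₀V]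
          split
          · rfl
          · rename_i h; exact absurd hi₀ h
        have hrest : ∑ i ∈ (F v).erase i₀, M i v = ((F v).card : ℝ) - 1 := by
          have hone : ∀ i ∈ (F v).erase i₀, M i v = 1 := by
            intro i hi
            have hine : i ≠ i₀ := Finset.ne_of_mem_erase hi
            have himem : i ∈ F v := Finset.mem_of_mem_erase hi
            have hiV : i ∈ V := (Finset.mem_filter.mp himem).1
            have hiX : X i v = true := (Finset.mem_filter.mp himem).2
            have hminne : (F v).min ≠ (i : WithBot (Fin n)) := by
              rw [hi₀]
              intro h
              exact hine (WithBot.coe_inj.mp h).symm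
            simp [hMdef, hiX, hiV, hminne]
          rw [Finset.sum_congr rfl hone]
          simp [Finset.card_erase_of_mem hi₀mem]
          have : 1 ≤ (F v).card := by omega
          push_cast [Nat.cast_sub this]
          ring
        rw [hval, hrest]
        ring
      · rw [Finset.not_nonempty_iff_eq_empty] at hne
        simp [hne]
    obtain ⟨i₀, hi₀⟩ := hVne
    have := hrank g hrel i₀
    simp [hg, hi₀] at this
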